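/- Let ν be a σ-finite measure on the finite nonempty subsets of Z^d with ν(S_i) < ∞ for each i, and suppose that for every δ ∈ (0,1), ν({Δ : |Δ ∩ Λ_n| ≥ δ|Λ_n|}) → 0 as n → ∞. Then (2n+1)^{−2d} Σ_{i,j ∈ Λ_n} exp(ν(S_i ∩ S_j)) → 1 as n → ∞, assuming ν is translation invariant. -/
import Mathlib


open MeasureTheory Filter ENNReal

private lemma stmt8_exp_le_aux {x C : ℝ} (hx : 0 ≤ x) (hxC : x ≤ C) :
    Real.exp x ≤ 1 + Real.exp C * x := by
  have h1 : 1 - x ≤ Real.exp (-x) := by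
    have := Real.add_one_le_exp (-x); linarith
  have h2 : (1 - x) * Real.exp x ≤ 1 := by
    calc (1 - x) * Real.exp x ≤ Real.exp (-x) * Real.exp x :=
          mul_le_mul_of_nonneg_right h1 (Real.exp_pos x).le
      _ = 1 := by rw [← Real.exp_add]; simp
  have h4 : x * Real.exp x ≤ x * Real.exp C :=
    mul_le_mul_of_nonneg_left (Real.exp_le_exp.2 hxC) hx
  nlinarith [Real.exp_pos x]

set_option maxHeartbeats 1000000 in
/-- If a translation invariant intensity measure concentrated on finite
nonempty subsets of `ℤ^d` gives vanishing mass to high-density sets, then the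
normalized double sum of `exp(ν(S_i ∩ S_j))` over the box converges to `1`. -/
theorem stmt_8 {d : ℕ} (hd : 1 ≤ d) [MeasurableSpace (Set (Fin d → ℤ))]
    (ν : Measure (Set (Fin d → ℤ))) [SigmaFinite ν]
    (hconc : ν {Δ : Set (Fin d → ℤ) | ¬(Δ.Finite ∧ Δ.Nonempty)} = 0)
    (hm : ∀ i : Fin d → ℤ, MeasurableSet {Δ : Set (Fin d → ℤ) | i ∈ Δ})
    (hinv : ∀ x : Fin d → ℤ,
      MeasurePreserving (Set.image (fun y => x + y)) ν ν)
    (hfin : ∀ i : Fin d → ℤ, ν {Δ : Set (Fin d → ℤ) | i ∈ Δ} ≠ ⊤)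
    (Λ : ℕ → Finset (Fin d → ℤ))
    (hΛ : ∀ n, Λ n = Fintype.piFinset fun _ : Fin d => Finset.Icc (-(n : ℤ)) n)
    (hdens : ∀ δ : ℝ, δ ∈ Set.Ioo (0 : ℝ) 1 →
      Tendsto (fun n : ℕ =>
          ν {Δ : Set (Fin d → ℤ) |
            δ * ((Λ n).card : ℝ) ≤ ((Δ ∩ (↑(Λ n) : Set (Fin d → ℤ))).ncard : ℝ)})
        atTop (nhds 0)) :
    Tendsto (fun n : ℕ =>
        ((2 * (n : ℝ) + 1) ^ (2 * d))⁻¹ *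
          ∑ i ∈ Λ n, ∑ j ∈ Λ n,
            Real.exp ((ν ({Δ : Set (Fin d → ℤ) | i ∈ Δ} ∩
                {Δ : Set (Fin d → ℤ) | j ∈ Δ})).toReal))
      atTop (nhds 1) := by
  classical
  set S : (Fin d → ℤ) → Set (Set (Fin d → ℤ)) := fun i => {Δ | i ∈ Δ} with hSdef
  -- translation invariance
  have hSi : ∀ i, ν (S i) = ν (S 0) := by
    intro i
    have h := (hinv (-i)).measure_preimage (hm 0).nullMeasurableSet
    have hpre : (Set.image (fun y => -i + y)) ⁻¹' (S 0) = S i := by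
      ext Δ
      simp only [hSdef, Set.mem_preimage, Set.mem_setOf_eq, Set.mem_image]
      constructor
      · rintro ⟨y, hy, h0⟩
        have : i = y := neg_add_eq_zero.mp h0
        rwa [← this] at hy
      · intro hi; exact ⟨i, hi, by funext k; simp⟩
    rw [hpre] at h
    exact h
  -- cardinality of the box
  have hcard : ∀ n, (Λ n).card = (2 * n + 1) ^ d := by
    intro n
    rw [hΛ n, Fintype.card_piFinset]
    have : (Finset.Icc (-(n : ℤ)) n).card = 2 * n + 1 := by
      rw [Int.card_Icc]
      omega
    simp [this]
  -- the counting function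
  set N : ℕ → Set (Fin d → ℤ) → ℕ :=
    fun n Δ => ((Λ n).filter (fun i => i ∈ Δ)).card with hNdef
  have hNmeas : ∀ n, Measurable (N n) := by
    intro n
    have : N n = fun Δ => ∑ i ∈ Λ n, if i ∈ Δ then 1 else 0 := by
      funext Δ; exact Finset.card_filter _ _
    rw [this]
    exact Finset.measurable_sum _ fun i _ =>
      Measurable.ite (hm i) measurable_const measurable_const
  have hNcard : ∀ n Δ, N n Δ ≤ (Λ n).card := fun n Δ => Finset.card_filter_le _ _
  -- the key integral identity
  have key : ∀ (n : ℕ) (A : Set (Set (Fin d → ℤ))), MeasurableSet A →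
      ∑ j ∈ Λ n, ν (S j ∩ A) = ∫⁻ Δ in A, (N n Δ : ℝ≥0∞) ∂ν := by
    intro n A hA
    have h1 : ∀ j, ν (S j ∩ A) = ∫⁻ Δ, (S j).indicator 1 Δ ∂(ν.restrict A) := by
      intro j
      rw [lintegral_indicator_one (hm j), Measure.restrict_apply (hm j)]
    simp_rw [h1]
    rw [← lintegral_finset_sum _ (fun j _ => measurable_one.indicator (hm j))]
    apply lintegral_congr
    intro Δ
    simp only [Set.indicator_apply, hSdef, Set.mem_setOf_eq, Pi.one_apply, hNdef,
      Finset.card_filter]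
    rw [Nat.cast_sum]
    congr 1
    funext j
    split <;> simp
  -- constants
  set c := ν (S 0) with hc
  have hcfin : c ≠ ⊤ := hfin 0
  set C := c.toReal with hCdef
  have hC0 : (0:ℝ) ≤ C := ENNReal.toReal_nonneg
  set E := Real.exp C with hEdef
  have hE0 : (0:ℝ) < E := Real.exp_pos _
  have hterm_le : ∀ i j : Fin d → ℤ, ν (S i ∩ S j) ≤ c := fun i j =>
    le_trans (measure_mono Set.inter_subset_left) (le_of_eq (hSi i))
  have hterm_ne : ∀ i j : Fin d → ℤ, ν (S i ∩ S j) ≠ ⊤ := fun i j =>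
    ne_top_of_le_ne_top hcfin (hterm_le i j)
  have hterm_toReal : ∀ i j : Fin d → ℤ, (ν (S i ∩ S j)).toReal ≤ C := fun i j =>
    ENNReal.toReal_mono hcfin (hterm_le i j)
  -- normalizer
  have hm0 : ∀ n, (0:ℝ) < ((Λ n).card : ℝ) := by
    intro n
    have : 0 < (Λ n).card := by rw [hcard n]; positivity
    exact_mod_cast this
  have hnorm : ∀ n : ℕ, (2 * (n:ℝ) + 1) ^ (2 * d) = (((Λ n).card : ℝ)) ^ 2 := by
    intro n
    rw [hcard n, mul_comm 2 d, pow_mul]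
    push_cast
    ring
  -- main estimate
  rw [Metric.tendsto_atTop]
  intro ε hε
  set δ : ℝ := min (1/2) (ε / (2 * E * (C + 1))) with hδdef
  have hδ0 : 0 < δ := by
    apply lt_min (by norm_num)
    positivity
  have hδ1 : δ < 1 := lt_of_le_of_lt (min_le_left _ _) (by norm_num)
  have hδC : δ * C ≤ ε / (2 * E) := by
    have h1 : δ ≤ ε / (2 * E * (C + 1)) := min_le_right _ _
    have h2 : δ * C ≤ (ε / (2 * E * (C + 1))) * C :=
      mul_le_mul_of_nonneg_right h1 hC0
    have h3 : (ε / (2 * E * (C + 1))) * C ≤ ε / (2 * E) := by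
      rw [div_mul_eq_mul_div, div_le_div_iff₀ (by positivity) (by positivity)]
      nlinarith
    linarith
  have hdd := hdens δ ⟨hδ0, hδ1⟩
  have hev : ∀ᶠ n in atTop,
      ν {Δ : Set (Fin d → ℤ) |
          δ * ((Λ n).card : ℝ) ≤ ((Δ ∩ (↑(Λ n) : Set (Fin d → ℤ))).ncard : ℝ)}
        < ENNReal.ofReal (ε / (2 * E)) := by
    apply hdd.eventually_lt_const
    simp only [ENNReal.ofReal_pos]
    positivity
  rw [eventually_atTop] at hev
  obtain ⟨M, hM⟩ := hev
  refine ⟨M, fun n hn => ?_⟩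
  -- notation for this n
  set m : ℕ := (Λ n).card with hmdef
  set D : Set (Set (Fin d → ℤ)) :=
    {Δ : Set (Fin d → ℤ) |
      δ * ((Λ n).card : ℝ) ≤ ((Δ ∩ (↑(Λ n) : Set (Fin d → ℤ))).ncard : ℝ)} with hDdef
  have hDn := hM n hn
  have hDfin : ν D ≠ ⊤ := (lt_of_lt_of_le hDn le_top).ne
  have hncard : ∀ Δ : Set (Fin d → ℤ), (Δ ∩ (↑(Λ n) : Set (Fin d → ℤ))).ncard = N n Δ := by
    intro Δ
    have h1 : Δ ∩ (↑(Λ n) : Set (Fin d → ℤ)) = ↑((Λ n).filter (fun i => i ∈ Δ)) := by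
      ext x; simp [and_comm]
    rw [h1, Set.ncard_coe_finset]
  have hDeq : D = (N n) ⁻¹' {k : ℕ | δ * (m:ℝ) ≤ (k:ℝ)} := by
    ext Δ
    simp only [hDdef, Set.mem_setOf_eq, Set.mem_preimage, hncard Δ, hmdef]
  have hDmeas : MeasurableSet D := by
    rw [hDeq]
    exact hNmeas n .of_discrete
  -- the row estimate
  have hrow : ∀ i ∈ Λ n, ∑ j ∈ Λ n, ν (S i ∩ S j) ≤
      (m : ℝ≥0∞) * ν D + ENNReal.ofReal (δ * m) * c := by
    intro i _
    have hAmeas : MeasurableSet ((S i) ∩ Dᶜ) := (hm i).inter hDmeas.compl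
    calc ∑ j ∈ Λ n, ν (S i ∩ S j)
        = ∑ j ∈ Λ n, (ν ((S i ∩ S j) ∩ D) + ν ((S i ∩ S j) \ D)) := by
          refine Finset.sum_congr rfl fun j _ => ?_
          rw [measure_inter_add_diff _ hDmeas]
      _ ≤ ∑ j ∈ Λ n, (ν D + ν (S j ∩ (S i ∩ Dᶜ))) := by
          refine Finset.sum_le_sum fun j _ => ?_
          gcongr
          · exact Set.inter_subset_right
          · rw [Set.diff_eq]
            intro Δ hΔ
            exact ⟨hΔ.1.2, hΔ.1.1, hΔ.2⟩
      _ = (m : ℝ≥0∞) * ν D + ∑ j ∈ Λ n, ν (S j ∩ (S i ∩ Dᶜ)) := by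
          rw [Finset.sum_add_distrib, Finset.sum_const, nsmul_eq_mul, hmdef]
      _ = (m : ℝ≥0∞) * ν D + ∫⁻ Δ in (S i ∩ Dᶜ), (N n Δ : ℝ≥0∞) ∂ν := by
          rw [key n _ hAmeas]
      _ ≤ (m : ℝ≥0∞) * ν D + ENNReal.ofReal (δ * m) * ν (S i ∩ Dᶜ) := by
          gcongr
          calc ∫⁻ Δ in (S i ∩ Dᶜ), (N n Δ : ℝ≥0∞) ∂ν
              ≤ ∫⁻ _ in (S i ∩ Dᶜ), ENNReal.ofReal (δ * m) ∂ν := by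
                refine setLIntegral_mono' hAmeas fun Δ hΔ => ?_
                have h2 : ¬ (δ * (m:ℝ) ≤ ((N n Δ : ℕ) : ℝ)) := by
                  have := hΔ.2
                  rw [hDeq] at this
                  simpa using this
                push_neg at h2
                calc ((N n Δ : ℕ) : ℝ≥0∞) = ENNReal.ofReal ((N n Δ : ℕ) : ℝ) := by
                      rw [ENNReal.ofReal_natCast]
                  _ ≤ ENNReal.ofReal (δ * m) := ENNReal.ofReal_le_ofReal h2.le
            _ = ENNReal.ofReal (δ * m) * ν (S i ∩ Dᶜ) := setLIntegral_const _ _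
      _ ≤ (m : ℝ≥0∞) * ν D + ENNReal.ofReal (δ * m) * c := by
          gcongr
          exact le_trans (measure_mono Set.inter_subset_left) (le_of_eq (hSi i))
  -- total ENNReal estimate
  have hT : ∑ i ∈ Λ n, ∑ j ∈ Λ n, ν (S i ∩ S j) ≤
      (m : ℝ≥0∞) * ((m : ℝ≥0∞) * ν D + ENNReal.ofReal (δ * m) * c) := by
    calc ∑ i ∈ Λ n, ∑ j ∈ Λ n, ν (S i ∩ S j)
        ≤ ∑ _i ∈ Λ n, ((m : ℝ≥0∞) * ν D + ENNReal.ofReal (δ * m) * c) :=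
          Finset.sum_le_sum hrow
      _ = (m : ℝ≥0∞) * ((m : ℝ≥0∞) * ν D + ENNReal.ofReal (δ * m) * c) := by
          rw [Finset.sum_const, nsmul_eq_mul, hmdef]
  have hbound_ne : (m : ℝ≥0∞) * ((m : ℝ≥0∞) * ν D + ENNReal.ofReal (δ * m) * c) ≠ ⊤ := by
    apply ENNReal.mul_ne_top (ENNReal.natCast_ne_top m)
    exact ENNReal.add_ne_top.mpr
      ⟨ENNReal.mul_ne_top (ENNReal.natCast_ne_top m) hDfin,
        ENNReal.mul_ne_top ENNReal.ofReal_ne_top hcfin⟩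
  -- pass to reals
  set t : ℝ := (ν D).toReal with htdef
  have ht0 : 0 ≤ t := ENNReal.toReal_nonneg
  have htlt : t < ε / (2 * E) := by
    have h1 : ν D < ENNReal.ofReal (ε / (2 * E)) := hDn
    have := ENNReal.toReal_lt_toReal hDfin ENNReal.ofReal_ne_top |>.mpr h1
    rwa [ENNReal.toReal_ofReal (div_nonneg hε.le (by linarith))] at this
  have hrow_ne : ∀ i ∈ Λ n, ∑ j ∈ Λ n, ν (S i ∩ S j) ≠ ⊤ := by
    intro i _
    rw [← lt_top_iff_ne_top]
    calc ∑ j ∈ Λ n, ν (S i ∩ S j) ≤ ∑ _j ∈ Λ n, c :=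
          Finset.sum_le_sum fun j _ => hterm_le i j
      _ = (m : ℝ≥0∞) * c := by rw [Finset.sum_const, nsmul_eq_mul, hmdef]
      _ < ⊤ := ENNReal.mul_lt_top (ENNReal.natCast_lt_top m) hcfin.lt_top
  have h1 : (∑ i ∈ Λ n, ∑ j ∈ Λ n, ν (S i ∩ S j)).toReal =
      ∑ i ∈ Λ n, ∑ j ∈ Λ n, (ν (S i ∩ S j)).toReal := by
    rw [ENNReal.toReal_sum hrow_ne]
    exact Finset.sum_congr rfl fun i _ => ENNReal.toReal_sum fun j _ => hterm_ne i j
  have hbound_toReal : ((m : ℝ≥0∞) * ((m : ℝ≥0∞) * ν D + ENNReal.ofReal (δ * m) * c)).toReal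
      = (m:ℝ) * ((m:ℝ) * t + (δ * m) * C) := by
    rw [ENNReal.toReal_mul,
      ENNReal.toReal_add (ENNReal.mul_ne_top (ENNReal.natCast_ne_top m) hDfin)
        (ENNReal.mul_ne_top ENNReal.ofReal_ne_top hcfin),
      ENNReal.toReal_mul, ENNReal.toReal_mul, ENNReal.toReal_natCast,
      ENNReal.toReal_ofReal (mul_nonneg hδ0.le (Nat.cast_nonneg m))]
  have hsum_toReal : ∑ i ∈ Λ n, ∑ j ∈ Λ n, (ν (S i ∩ S j)).toReal ≤
      (m:ℝ) * ((m:ℝ) * t + (δ * m) * C) := by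
    rw [← h1, ← hbound_toReal]
    exact ENNReal.toReal_mono hbound_ne hT
  -- real exponential estimate
  have hexp_sum : ∑ i ∈ Λ n, ∑ j ∈ Λ n, Real.exp ((ν (S i ∩ S j)).toReal)
      ≤ (m:ℝ) * (m:ℝ) + E * ((m:ℝ) * ((m:ℝ) * t + (δ * m) * C)) := by
    calc ∑ i ∈ Λ n, ∑ j ∈ Λ n, Real.exp ((ν (S i ∩ S j)).toReal)
        ≤ ∑ i ∈ Λ n, ∑ j ∈ Λ n, (1 + E * (ν (S i ∩ S j)).toReal) := by
          refine Finset.sum_le_sum fun i _ => Finset.sum_le_sum fun j _ => ?_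
          exact stmt8_exp_le_aux ENNReal.toReal_nonneg (hterm_toReal i j)
      _ = (m:ℝ) * (m:ℝ) + E * ∑ i ∈ Λ n, ∑ j ∈ Λ n, (ν (S i ∩ S j)).toReal := by
          simp only [Finset.sum_add_distrib, Finset.sum_const, nsmul_eq_mul,
            ← Finset.mul_sum, hmdef]
          push_cast
          ring
      _ ≤ (m:ℝ) * (m:ℝ) + E * ((m:ℝ) * ((m:ℝ) * t + (δ * m) * C)) := by
          have := mul_le_mul_of_nonneg_left hsum_toReal hE0.le
          linarith
  have hexp_low : (m:ℝ) * (m:ℝ) ≤ ∑ i ∈ Λ n, ∑ j ∈ Λ n,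
      Real.exp ((ν (S i ∩ S j)).toReal) := by
    calc (m:ℝ) * (m:ℝ) = ∑ _i ∈ Λ n, ∑ _j ∈ Λ n, (1:ℝ) := by
          simp [Finset.sum_const, hmdef]
      _ ≤ ∑ i ∈ Λ n, ∑ j ∈ Λ n, Real.exp ((ν (S i ∩ S j)).toReal) := by
          refine Finset.sum_le_sum fun i _ => Finset.sum_le_sum fun j _ => ?_
          exact Real.one_le_exp ENNReal.toReal_nonneg
  -- put things together
  have hmpos : (0:ℝ) < (m:ℝ) := hm0 n
  have hnormn : (2 * (n:ℝ) + 1) ^ (2 * d) = ((m:ℝ)) ^ 2 := by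
    rw [hnorm n, hmdef]
  set a : ℝ := ((2 * (n:ℝ) + 1) ^ (2 * d))⁻¹ *
      ∑ i ∈ Λ n, ∑ j ∈ Λ n, Real.exp ((ν (S i ∩ S j)).toReal) with hadef
  have hinvpos : (0:ℝ) < (((m:ℝ)) ^ 2)⁻¹ := inv_pos.mpr (pow_pos hmpos 2)
  have halow : 1 ≤ a := by
    rw [hadef, hnormn]
    calc (1:ℝ) = (((m:ℝ))^2)⁻¹ * ((m:ℝ) * (m:ℝ)) := by
          rw [← sq, inv_mul_cancel₀ (pow_ne_zero 2 hmpos.ne')]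
      _ ≤ _ := by
          exact mul_le_mul_of_nonneg_left hexp_low hinvpos.le
  have haup : a ≤ 1 + E * (t + δ * C) := by
    rw [hadef, hnormn]
    calc (((m:ℝ))^2)⁻¹ * ∑ i ∈ Λ n, ∑ j ∈ Λ n, Real.exp ((ν (S i ∩ S j)).toReal)
        ≤ (((m:ℝ))^2)⁻¹ * ((m:ℝ) * (m:ℝ) + E * ((m:ℝ) * ((m:ℝ) * t + (δ * m) * C))) :=
          mul_le_mul_of_nonneg_left hexp_sum hinvpos.le
      _ = 1 + E * (t + δ * C) := by
          have h2 : (m:ℝ) * (m:ℝ) + E * ((m:ℝ) * ((m:ℝ) * t + (δ * m) * C)) =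
              ((m:ℝ)^2) * (1 + E * (t + δ * C)) := by ring
          rw [h2, inv_mul_cancel_left₀ (pow_ne_zero 2 hmpos.ne')]
  have hfinal : E * (t + δ * C) < ε := by
    have h1 : t + δ * C < ε / (2 * E) + ε / (2 * E) := by
      have := hδC
      linarith
    calc E * (t + δ * C) < E * (ε / (2 * E) + ε / (2 * E)) := by
          apply mul_lt_mul_of_pos_left h1 hE0
      _ = ε := by field_simp; ring
  show dist a 1 < ε
  rw [Real.dist_eq, abs_lt]
  constructor <;> [linarith; linarith]
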